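/- Fix M > 0. (a) Let ρ ↦ q(ρ) ∈ (0,1) be any function on (0,∞) such that for every ρ > 0: 2(1 − e^{−M}) ≤ e^{−M} ρ log(1/q(ρ)) ≤ 2, and for every n ∈ ℕ the total mass Σ_{(r_1,...,r_n)∈ℕ^n} Π_{i=1}^n (1−q(ρ))^{r_i} ρ F_M(r_{i−1}, r_i, u_{i−1}) lies in [1 − e^{−M}, 1]. Then lim_{ρ→0+} ρ log(1/q(ρ)) = 2(e^M − 1). (b) Fix ρ > 0 and let M ↦ q(M) ∈ (0,1) satisfy the same two properties for every M > 0; then lim_{M→∞} e^{−M} log(1/q(M)) = 2/ρ. -/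

import Mathlib

open MeasureTheory ProbabilityTheory Filter Set

noncomputable section

/-- The function `F_M : (ℕ ∪ {0}) × ℕ × [0,1] → [0,1]` of the paper. -/
def FM (M : ℝ) (ℓ r : ℕ) (u : ℝ) : ℝ :=
  if ℓ = 0 then Real.exp (-M) / (2 * (r : ℝ))
  else Real.exp (-M) / (2 * (r : ℝ)) *
    (1 - Real.exp (-M) * (1 - 1 / (2 * (r : ℝ)) - (1 - u) / (2 * (ℓ : ℝ))))⁻¹

/-- The recursion `u₀ = 0`, `u_i = F_M(r_{i-1}, r_i, u_{i-1})` (one takes `r 0 = 0`). -/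
def uSeq (M : ℝ) (r : ℕ → ℕ) : ℕ → ℝ
  | 0 => 0
  | (i + 1) => FM M (r i) (r (i + 1)) (uSeq M r i)

/-- Extend a tuple `(r_1, …, r_n)` of positive integers to a function `ℕ → ℕ`
with value `r_i` at `i ∈ {1, …, n}` and `0` elsewhere (in particular `r 0 = 0`). -/
def ext (n : ℕ) (r : Fin n → ℕ+) (i : ℕ) : ℕ :=
  if h : 1 ≤ i ∧ i ≤ n then (r ⟨i - 1, by omega⟩ : ℕ) else 0

/-- Combine a fixed prefix `rp` (used for indices `< m`) with a summation variable
`s = (r_m, …, r_n)` of positive integers, into a single gap function `ℕ → ℕ`. -/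
def combine (m n : ℕ) (rp : ℕ → ℕ) (s : Fin (n + 1 - m) → ℕ+) (i : ℕ) : ℕ :=
  if i < m then rp i
  else if h : i - m < n + 1 - m then (s ⟨i - m, h⟩ : ℕ) else 0

/-- `Σ_{(r_m,…,r_n)∈ℕ^{n−m+1}} Π_{i=m}^n (1−q)^{r_i} ρ F_M(r_{i−1}, r_i, u_{i−1})`,
with the gaps `r_0 = 0, r_1, …, r_{m−1}` given by the prefix `rp`. -/
def Smass (M ρ q : ℝ) (m n : ℕ) (rp : ℕ → ℕ) : ℝ :=
  ∑' s : Fin (n + 1 - m) → ℕ+, ∏ i ∈ Finset.Icc m n,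
    (1 - q) ^ (combine m n rp s i) * ρ *
      FM M (combine m n rp s (i - 1)) (combine m n rp s i)
        (uSeq M (combine m n rp s) (i - 1))

lemma FM_r_zero (M : ℝ) (ℓ : ℕ) (u : ℝ) : FM M ℓ 0 u = 0 := by
  simp [FM]

lemma FM_l_zero (M : ℝ) (r : ℕ) (u : ℝ) : FM M 0 r u = Real.exp (-M) / (2 * (r : ℝ)) :=
  if_pos rfl

lemma FM_mem {M : ℝ} (hM : 0 < M) (ℓ r : ℕ) {u : ℝ} (hu : u ∈ Set.Icc (0:ℝ) 1) :
    FM M ℓ r u ∈ Set.Icc (0:ℝ) 1 := by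
  have hx0 : 0 < Real.exp (-M) := Real.exp_pos _
  have hx1 : Real.exp (-M) < 1 := by
    rw [Real.exp_lt_one_iff]; linarith
  set x := Real.exp (-M) with hxdef
  rcases Nat.eq_zero_or_pos r with hr | hr
  · subst hr; rw [FM_r_zero]; exact ⟨le_refl _, zero_le_one⟩
  have hr1 : (1:ℝ) ≤ (r:ℝ) := by exact_mod_cast hr
  rcases Nat.eq_zero_or_pos ℓ with hℓ | hℓ
  · subst hℓ; rw [FM_l_zero]
    constructor
    · positivity
    · rw [div_le_one (by linarith)]; linarith
  have hℓ1 : (1:ℝ) ≤ (ℓ:ℝ) := by exact_mod_cast hℓ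
  rw [FM, if_neg (by omega), ← hxdef]
  obtain ⟨hu0, hu1⟩ := hu
  set D := 1 - x * (1 - 1 / (2 * (r:ℝ)) - (1 - u) / (2 * (ℓ:ℝ))) with hDdef
  have hterm : 0 ≤ x * ((1 - u) / (2 * (ℓ:ℝ))) :=
    mul_nonneg hx0.le (div_nonneg (by linarith) (by linarith))
  have hexp : D = 1 - x + x * (1 / (2 * (r:ℝ))) + x * ((1 - u) / (2 * (ℓ:ℝ))) := by
    rw [hDdef]; ring
  have hxr : 0 < x * (1 / (2 * (r:ℝ))) := by positivity
  have hD1 : 1 - x + x * (1 / (2 * (r:ℝ))) ≤ D := by rw [hexp]; linarith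
  clear_value x D
  have hDpos : 0 < D := by linarith
  have hfrac : x / (2 * (r:ℝ)) = x * (1 / (2 * (r:ℝ))) := by ring
  have hle : x / (2 * (r:ℝ)) ≤ D := by rw [hfrac]; linarith
  constructor
  · have h9 : 0 ≤ x / (2 * (r:ℝ)) := by positivity
    exact mul_nonneg h9 (inv_nonneg.2 hDpos.le)
  · calc x / (2 * (r:ℝ)) * D⁻¹ ≤ D * D⁻¹ :=
        mul_le_mul_of_nonneg_right hle (inv_nonneg.2 hDpos.le)
    _ = 1 := mul_inv_cancel₀ hDpos.ne'

lemma FM_lower {M : ℝ} (hM : 0 < M) {R ℓ r : ℕ} (hR : 1 ≤ R) (hℓ : R ≤ ℓ) (hr : R ≤ r)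
    {u : ℝ} (hu : u ∈ Set.Icc (0:ℝ) 1) :
    Real.exp (-M) / (2 * (r:ℝ)) * (1 - Real.exp (-M) + Real.exp (-M) / (R:ℝ))⁻¹
      ≤ FM M ℓ r u := by
  have hx0 : 0 < Real.exp (-M) := Real.exp_pos _
  have hx1 : Real.exp (-M) < 1 := by
    rw [Real.exp_lt_one_iff]; linarith
  set x := Real.exp (-M) with hxdef
  have hℓ0 : ℓ ≠ 0 := by omega
  rw [FM, if_neg hℓ0, ← hxdef]
  obtain ⟨hu0, hu1⟩ := hu
  have hR1 : (1:ℝ) ≤ (R:ℝ) := by exact_mod_cast hR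
  have hRr : (R:ℝ) ≤ (r:ℝ) := by exact_mod_cast hr
  have hRl : (R:ℝ) ≤ (ℓ:ℝ) := by exact_mod_cast hℓ
  have hr1 : (1:ℝ) ≤ (r:ℝ) := le_trans hR1 hRr
  have hℓ1 : (1:ℝ) ≤ (ℓ:ℝ) := le_trans hR1 hRl
  set D := 1 - x * (1 - 1 / (2 * (r:ℝ)) - (1 - u) / (2 * (ℓ:ℝ))) with hDdef
  have hexp : D = 1 - x + x * (1 / (2 * (r:ℝ))) + x * ((1 - u) / (2 * (ℓ:ℝ))) := by
    rw [hDdef]; ring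
  have hDpos : 0 < D := by
    have h1 : 0 < x * (1 / (2 * (r:ℝ))) := by positivity
    have h2 : 0 ≤ x * ((1 - u) / (2 * (ℓ:ℝ))) :=
      mul_nonneg hx0.le (div_nonneg (by linarith) (by linarith))
    rw [hexp]; linarith
  clear_value x D
  have hb1 : x * (1 / (2 * (r:ℝ))) ≤ x * (1 / (2 * (R:ℝ))) := by
    apply mul_le_mul_of_nonneg_left _ hx0.le
    apply one_div_le_one_div_of_le (by linarith) (by linarith)
  have hb2 : x * ((1 - u) / (2 * (ℓ:ℝ))) ≤ x * (1 / (2 * (R:ℝ))) := by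
    apply mul_le_mul_of_nonneg_left _ hx0.le
    apply div_le_div₀ (by norm_num) (by linarith) (by linarith) (by linarith)
  have hsum : x * (1 / (2 * (R:ℝ))) + x * (1 / (2 * (R:ℝ))) = x / (R:ℝ) := by
    field_simp; ring
  have hDle : D ≤ 1 - x + x / (R:ℝ) := by rw [hexp]; linarith
  have hKpos : 0 < 1 - x + x / (R:ℝ) := by
    have h3 : 0 < x / (R:ℝ) := by positivity
    linarith
  have hinv : (1 - x + x / (R:ℝ))⁻¹ ≤ D⁻¹ := inv_anti₀ hDpos hDle
  exact mul_le_mul_of_nonneg_left hinv (div_nonneg hx0.le (by linarith))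
lemma uSeq_mem {M : ℝ} (hM : 0 < M) (r : ℕ → ℕ) (i : ℕ) : uSeq M r i ∈ Set.Icc (0:ℝ) 1 := by
  induction i with
  | zero => simp [uSeq]
  | succ i ih => exact FM_mem hM _ _ ih
lemma tsum_pi_prod {n : ℕ} (F : Fin n → ℕ+ → ENNReal) :
    ∑' s : Fin n → ℕ+, ∏ j, F j (s j) = ∏ j, ∑' r, F j r := by
  induction n with
  | zero =>
    simp only [Finset.univ_eq_empty, Finset.prod_empty]
    exact tsum_eq_single (fun i => i.elim0) (fun b' hb' => absurd (Subsingleton.elim _ _) hb')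
  | succ n ih =>
    have he := (Fin.consEquiv (fun _ : Fin (n+1) => ℕ+)).tsum_eq
      (f := fun s : Fin (n+1) → ℕ+ => ∏ j, F j (s j))
    rw [← he, ENNReal.tsum_prod']
    have hstep : ∀ (a : ℕ+) (b : Fin n → ℕ+),
        (∏ j : Fin (n+1), F j ((Fin.consEquiv (fun _ : Fin (n+1) => ℕ+)) (a, b) j)) =
          F 0 a * ∏ j : Fin n, F j.succ (b j) := by
      intro a b
      simp only [Fin.consEquiv_apply]
      rw [Fin.prod_univ_succ]
      simp
    calc ∑' (a : ℕ+) (b : Fin n → ℕ+),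
          ∏ j : Fin (n+1), F j ((Fin.consEquiv (fun _ : Fin (n+1) => ℕ+)) (a, b) j)
        = ∑' (a : ℕ+) (b : Fin n → ℕ+), F 0 a * ∏ j : Fin n, F j.succ (b j) := by
          apply tsum_congr; intro a; apply tsum_congr; intro b; exact hstep a b
      _ = ∑' a : ℕ+, F 0 a * ∑' b : Fin n → ℕ+, ∏ j : Fin n, F j.succ (b j) := by
          apply tsum_congr; intro a; rw [ENNReal.tsum_mul_left]
      _ = (∑' a : ℕ+, F 0 a) * ∑' b : Fin n → ℕ+, ∏ j : Fin n, F j.succ (b j) := by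
          rw [ENNReal.tsum_mul_right]
      _ = ∏ j : Fin (n+1), ∑' r, F j r := by
          rw [ih, Fin.prod_univ_succ]
lemma hasSum_c {q : ℝ} (hq0 : 0 < q) (hq1 : q < 1) :
    HasSum (fun r : ℕ+ => (1-q)^(r:ℕ) / ((r:ℕ):ℝ)) (Real.log (1/q)) := by
  have h1 : HasSum (fun n : ℕ => (1-q)^(n+1)/((n:ℝ)+1)) (Real.log (1/q)) := by
    have h0 := Real.hasSum_pow_div_log_of_abs_lt_one (x := 1-q)
      (by rw [abs_lt]; constructor <;> linarith)
    rw [sub_sub_cancel] at h0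
    rw [one_div, Real.log_inv]
    exact h0
  rw [← Equiv.hasSum_iff (Equiv.pnatEquivNat.symm)]
  have : ((fun r : ℕ+ => (1-q)^(r:ℕ) / ((r:ℕ):ℝ)) ∘ Equiv.pnatEquivNat.symm)
      = fun n : ℕ => (1-q)^(n+1)/((n:ℝ)+1) := by
    funext n
    simp [Function.comp, Equiv.pnatEquivNat, Nat.succPNat]
  rw [this]
  exact h1

lemma summable_geom_pnat {q : ℝ} (hq0 : 0 < q) (hq1 : q < 1) :
    Summable (fun r : ℕ+ => (1-q)^(r:ℕ)) := by
  rw [← Equiv.summable_iff (Equiv.pnatEquivNat.symm)]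
  have : ((fun r : ℕ+ => (1-q)^(r:ℕ)) ∘ Equiv.pnatEquivNat.symm)
      = fun n : ℕ => (1-q)^(n+1) := by
    funext n
    simp [Function.comp, Equiv.pnatEquivNat, Nat.succPNat]
  rw [this]
  exact (summable_geometric_of_lt_one (by linarith) (by linarith)).comp_injective
    Nat.succ_injective |>.congr (fun n => rfl)
lemma combine_lemma_zero (n : ℕ) (rp : ℕ → ℕ) (s : Fin (n + 1 - 1) → ℕ+) :
    combine 1 n rp s 0 = rp 0 := by simp [combine]

lemma combine_lemma_pos {n i : ℕ} (rp : ℕ → ℕ) (s : Fin (n + 1 - 1) → ℕ+)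
    (h1 : 1 ≤ i) (h2 : i ≤ n) (h3 : i - 1 < n + 1 - 1) :
    combine 1 n rp s i = (s ⟨i - 1, h3⟩ : ℕ) := by
  unfold combine
  rw [if_neg (by omega), dif_pos h3]
lemma key_bound {M ρ q : ℝ} (hM : 0 < M) (hρ : 0 < ρ) (hq0 : 0 < q) (hq1 : q < 1)
    (hmass : ∀ n : ℕ, 1 ≤ n → 1 - Real.exp (-M) ≤ Smass M ρ q 1 n (fun _ => 0) ∧
      Smass M ρ q 1 n (fun _ => 0) ≤ 1)
    (R : ℕ) (hR : 1 ≤ R) :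
    ρ * Real.log (1/q) ≤ 2 * (Real.exp M - 1) + 2/(R:ℝ) + ρ * R := by
  have hx0 : 0 < Real.exp (-M) := Real.exp_pos _
  have hx1 : Real.exp (-M) < 1 := by rw [Real.exp_lt_one_iff]; linarith
  set x := Real.exp (-M) with hxdef
  have hR1 : (1:ℝ) ≤ (R:ℝ) := by exact_mod_cast hR
  -- the series pieces
  set c : ℕ+ → ℝ := fun r => (1-q)^(r:ℕ) / ((r:ℕ):ℝ) with hcdef
  have hc_nonneg : ∀ r : ℕ+, 0 ≤ c r := fun r => by
    have : (0:ℝ) < ((r:ℕ):ℝ) := by exact_mod_cast r.pos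
    exact div_nonneg (pow_nonneg (by linarith) _) this.le
  have hc_le_one : ∀ r : ℕ+, c r ≤ 1 := fun r => by
    have h1 : (1:ℝ) ≤ ((r:ℕ):ℝ) := by exact_mod_cast r.one_le
    rw [hcdef, div_le_one (by linarith)]
    calc (1-q)^(r:ℕ) ≤ 1 := pow_le_one₀ (by linarith) (by linarith)
      _ ≤ ((r:ℕ):ℝ) := h1
  have hc : HasSum c (Real.log (1/q)) := hasSum_c hq0 hq1
  have hc_summable : Summable c := hc.summable
  set cR : ℕ+ → ℝ := fun r => if R ≤ (r:ℕ) then c r else 0 with hcRdef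
  set cS : ℕ+ → ℝ := fun r => if R ≤ (r:ℕ) then 0 else c r with hcSdef
  have hcR_nonneg : ∀ r, 0 ≤ cR r := fun r => by
    rw [hcRdef]; dsimp only; split
    · exact hc_nonneg r
    · exact le_refl 0
  have hcR_le : ∀ r, cR r ≤ c r := fun r => by
    rw [hcRdef]; dsimp only; split
    · exact le_refl _
    · exact hc_nonneg r
  have hcS_nonneg : ∀ r, 0 ≤ cS r := fun r => by
    rw [hcSdef]; dsimp only; split
    · exact le_refl 0
    · exact hc_nonneg r
  have hcS_le : ∀ r, cS r ≤ c r := fun r => by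
    rw [hcSdef]; dsimp only; split
    · exact hc_nonneg r
    · exact le_refl _
  have hcR_summable : Summable cR :=
    Summable.of_nonneg_of_le hcR_nonneg hcR_le hc_summable
  have hcS_summable : Summable cS :=
    Summable.of_nonneg_of_le hcS_nonneg hcS_le hc_summable
  -- small part bounded by R - 1
  have hcS_bound : ∑' r, cS r ≤ (R:ℝ) - 1 := by
    have hsupp : ∀ r : ℕ+, r ∉ Finset.image Nat.succPNat (Finset.range (R-1)) → cS r = 0 := by
      intro r hr
      rw [hcSdef]; dsimp only
      rw [if_pos]
      by_contra hlt
      push_neg at hlt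
      apply hr
      rw [Finset.mem_image]
      have hrpos := r.pos
      refine ⟨(r:ℕ) - 1, ?_, ?_⟩
      · rw [Finset.mem_range]
        omega
      · apply PNat.coe_injective
        rw [Nat.succPNat_coe]
        omega
    rw [tsum_eq_sum hsupp]
    calc ∑ r ∈ Finset.image Nat.succPNat (Finset.range (R-1)), cS r
        ≤ ∑ r ∈ Finset.image Nat.succPNat (Finset.range (R-1)), 1 := by
          apply Finset.sum_le_sum
          intro r _
          rw [hcSdef]; dsimp only; split
          · norm_num
          · exact hc_le_one r
      _ = (Finset.image Nat.succPNat (Finset.range (R-1)) : Finset ℕ+).card := by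
          rw [Finset.sum_const]; simp
      _ ≤ ((R:ℝ) - 1) := by
          have h1 : (Finset.image Nat.succPNat (Finset.range (R-1))).card ≤ R - 1 :=
            le_trans Finset.card_image_le (by rw [Finset.card_range])
          have h2 : ((R - 1 : ℕ) : ℝ) = (R:ℝ) - 1 := by
            have := hR
            push_cast [Nat.cast_sub hR]
            ring
          calc ((Finset.image Nat.succPNat (Finset.range (R-1))).card : ℝ)
              ≤ ((R - 1 : ℕ) : ℝ) := by exact_mod_cast h1
            _ = (R:ℝ) - 1 := h2
  have hcR_tsum : ∑' r, cR r = Real.log (1/q) - ∑' r, cS r := by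
    have hsplit : ∀ r, cR r = c r - cS r := by
      intro r
      rw [hcRdef, hcSdef]; dsimp only; split <;> ring
    calc ∑' r, cR r = ∑' r, (c r - cS r) := tsum_congr hsplit
      _ = ∑' r, c r - ∑' r, cS r := Summable.tsum_sub hc_summable hcS_summable
      _ = Real.log (1/q) - ∑' r, cS r := by rw [hc.tsum_eq]
  have hcR_lb : Real.log (1/q) - (R:ℝ) ≤ ∑' r, cR r := by
    rw [hcR_tsum]; linarith
  -- definition of f₀ and K
  set f₀ : ℕ+ → ℝ := fun r => ρ * x / 2 * cR r with hf₀def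
  have hf₀_nonneg : ∀ r, 0 ≤ f₀ r := fun r =>
    mul_nonneg (by positivity) (hcR_nonneg r)
  have hf₀_summable : Summable f₀ := hcR_summable.mul_left _
  set K : ℝ := (1 - x + x / (R:ℝ))⁻¹ with hKdef
  have hKinv_pos : 0 < 1 - x + x / (R:ℝ) := by
    have : 0 < x / (R:ℝ) := by positivity
    linarith
  have hK_pos : 0 < K := by rw [hKdef]; positivity
  have hK_ge1 : 1 ≤ K := by
    rw [hKdef]
    rw [le_inv_comm₀ one_pos hKinv_pos]
    have : x / (R:ℝ) ≤ x := by
      rw [div_le_iff₀ (by linarith)]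
      nlinarith
    linarith
  set L₀ : ℝ := ∑' r, f₀ r with hL₀def
  set L : ℝ := K * L₀ with hLdef
  have hL₀_nonneg : 0 ≤ L₀ := tsum_nonneg hf₀_nonneg
  have hL₀_lb : ρ * x / 2 * (Real.log (1/q) - (R:ℝ)) ≤ L₀ := by
    rw [hL₀def, hf₀def, tsum_mul_left]
    exact mul_le_mul_of_nonneg_left hcR_lb (by positivity)
  have hq' : (0:ℝ) ≤ 1 - q := by linarith
  have hL_nonneg : 0 ≤ L := mul_nonneg hK_pos.le hL₀_nonneg
  have hLn : ∀ m : ℕ, L₀ * L ^ m ≤ 1 := by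
    intro m
    obtain ⟨hmass_lb, hmass_ub⟩ := hmass (m+1) (by omega)
    set rr : (Fin (m+1) → ℕ+) → ℕ → ℕ := fun s => combine 1 (m+1) (fun _ => 0) s with hrrdef
    set P : (Fin (m+1) → ℕ+) → ℝ := fun s => ∏ i ∈ Finset.Icc 1 (m+1),
      (1 - q) ^ (rr s i) * ρ * FM M (rr s (i - 1)) (rr s i) (uSeq M (rr s) (i - 1)) with hPdef
    have hSm_eq : Smass M ρ q 1 (m+1) (fun _ => 0) = ∑' s : Fin (m+1) → ℕ+, P s := rfl
    have hterm_nonneg : ∀ (s : Fin (m+1) → ℕ+) (i : ℕ),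
        0 ≤ (1 - q) ^ (rr s i) * ρ * FM M (rr s (i - 1)) (rr s i) (uSeq M (rr s) (i - 1)) :=
      fun s i => mul_nonneg (mul_nonneg (pow_nonneg hq' _) hρ.le)
        (FM_mem hM _ _ (uSeq_mem hM _ _)).1
    have hP_nonneg : ∀ s, 0 ≤ P s := fun s => Finset.prod_nonneg fun i _ => hterm_nonneg s i
    have hP_summable : Summable P := by
      by_contra h
      have h0 : Smass M ρ q 1 (m+1) (fun _ => 0) = 0 := by
        rw [hSm_eq]; exact tsum_eq_zero_of_not_summable h
      rw [h0] at hmass_lb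
      linarith
    set G : Fin (m+1) → ℕ+ → ℝ := fun j r => (if (j:ℕ) = 0 then 1 else K) * f₀ r with hGdef
    have hG_nonneg : ∀ j r, 0 ≤ G j r := fun j r => by
      rw [hGdef]; dsimp only
      apply mul_nonneg _ (hf₀_nonneg r)
      split
      · norm_num
      · exact hK_pos.le
    have hG_summable : ∀ j, Summable (G j) := fun j => hf₀_summable.mul_left _
    have halg : ∀ (r : ℕ+) (a : ℝ),
        a * (ρ * x / 2 * c r) = (1 - q)^(r:ℕ) * ρ * (x / (2 * ((r:ℕ):ℝ)) * a) := by
      intro r a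
      rw [hcdef]; dsimp only
      have hr0 : ((r:ℕ):ℝ) ≠ 0 := by
        have := r.pos
        positivity
      field_simp
    have hpoint : ∀ s : Fin (m+1) → ℕ+, (∏ j : Fin (m+1), G j (s j)) ≤ P s := by
      intro s
      by_cases hall : ∀ j : Fin (m+1), R ≤ ((s j : ℕ))
      case neg =>
        push_neg at hall
        obtain ⟨j, hj⟩ := hall
        have hzero : G j (s j) = 0 := by
          have hf0 : f₀ (s j) = 0 := by
            rw [hf₀def]; dsimp only
            rw [hcRdef]; dsimp only
            rw [if_neg (show ¬ R ≤ ((s j : ℕ+) : ℕ) by omega)]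
            ring
          rw [hGdef]; dsimp only
          rw [hf0, mul_zero]
        calc (∏ j : Fin (m+1), G j (s j)) = 0 := Finset.prod_eq_zero (Finset.mem_univ j) hzero
          _ ≤ P s := hP_nonneg s
      case pos =>
      have hP_range : P s = ∏ k ∈ Finset.range (m+1), ((1 - q) ^ (rr s (1+k)) * ρ *
            FM M (rr s (1+k - 1)) (rr s (1+k)) (uSeq M (rr s) (1+k - 1))) := by
        rw [hPdef]; dsimp only
        rw [← Finset.Ico_add_one_right_eq_Icc, Finset.prod_Ico_eq_prod_range]
        rfl
      have hG_range : (∏ j : Fin (m+1), G j (s j)) = ∏ k ∈ Finset.range (m+1),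
          (fun k : ℕ => if h : k < m+1 then G ⟨k, h⟩ (s ⟨k, h⟩) else 1) k := by
        rw [← Fin.prod_univ_eq_prod_range]
        apply Finset.prod_congr rfl
        intro j _
        rw [dif_pos j.isLt]
      rw [hG_range, hP_range]
      apply Finset.prod_le_prod
      · intro k hk
        rw [dif_pos (Finset.mem_range.mp hk)]
        exact hG_nonneg _ _
      · intro k hk
        have hkn : k < m+1 := Finset.mem_range.mp hk
        rw [dif_pos hkn]
        have hone : 1 + k - 1 = k := by omega
        rw [hone]
        have hidx : rr s (1 + k) = ((s ⟨k, hkn⟩ : ℕ+) : ℕ) := by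
          rw [hrrdef]; dsimp only
          unfold combine
          rw [if_neg (by omega), dif_pos (by omega : 1 + k - 1 < m+1+1-1)]
          exact congrArg (fun t => ((s t : ℕ+) : ℕ)) (Fin.mk_eq_mk.mpr hone)
        rw [hidx]
        rcases Nat.eq_zero_or_pos k with hk0 | hk0
        · subst hk0
          have hr0 : rr s 0 = 0 := combine_lemma_zero (m+1) (fun _ => 0) s
          rw [hr0]
          have hu0 : uSeq M (rr s) 0 = 0 := rfl
          rw [hu0, FM_l_zero]
          have hval : ((⟨0, hkn⟩ : Fin (m+1)) : ℕ) = 0 := rfl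
          rw [hGdef]; dsimp only
          rw [if_pos hval, hf₀def]; dsimp only
          rw [hcRdef]; dsimp only
          rw [if_pos (hall ⟨0, hkn⟩)]
          have := halg (s ⟨0, hkn⟩) 1
          rw [mul_one] at this
          rw [this]
        · -- k ≥ 1
          have hval : ((⟨k, hkn⟩ : Fin (m+1)) : ℕ) = k := rfl
          rw [hGdef]; dsimp only
          rw [if_neg (by omega), hf₀def]; dsimp only
          rw [hcRdef]; dsimp only
          rw [if_pos (hall ⟨k, hkn⟩)]
          have hrk : rr s k = ((s ⟨k - 1, by omega⟩ : ℕ+) : ℕ) :=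
            combine_lemma_pos (n := m+1) (i := k) (fun _ => 0) s (by omega) (by omega) (by omega)
          have hlR : R ≤ rr s k := by rw [hrk]; exact hall _
          have hrR : R ≤ ((s ⟨k, hkn⟩ : ℕ+) : ℕ) := hall _
          have hFMlow := FM_lower (R := R) (ℓ := rr s k) (r := ((s ⟨k, hkn⟩ : ℕ+) : ℕ))
            hM hR hlR hrR (uSeq_mem hM (rr s) k)
          calc K * (ρ * x / 2 * c (s ⟨k, hkn⟩))
              = (1 - q)^((s ⟨k, hkn⟩ : ℕ+) : ℕ) * ρ *
                (x / (2 * (((s ⟨k, hkn⟩ : ℕ+) : ℕ):ℝ)) * K) := halg _ K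
            _ ≤ (1 - q)^((s ⟨k, hkn⟩ : ℕ+) : ℕ) * ρ *
                FM M (rr s k) ((s ⟨k, hkn⟩ : ℕ+) : ℕ) (uSeq M (rr s) k) := by
                apply mul_le_mul_of_nonneg_left _ (mul_nonneg (pow_nonneg hq' _) hρ.le)
                rw [hKdef]
                exact hFMlow
    -- ENNReal chain
    have h1 : ENNReal.ofReal (Smass M ρ q 1 (m+1) (fun _ => 0))
        = ∑' s : Fin (m+1) → ℕ+, ENNReal.ofReal (P s) := by
      rw [hSm_eq]; exact ENNReal.ofReal_tsum_of_nonneg hP_nonneg hP_summable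
    have h2 : (∑' s : Fin (m+1) → ℕ+, ∏ j, ENNReal.ofReal (G j (s j)))
        ≤ ∑' s : Fin (m+1) → ℕ+, ENNReal.ofReal (P s) := by
      apply ENNReal.tsum_le_tsum
      intro s
      rw [← ENNReal.ofReal_prod_of_nonneg (fun j _ => hG_nonneg j (s j))]
      exact ENNReal.ofReal_le_ofReal (hpoint s)
    rw [tsum_pi_prod (fun j r => ENNReal.ofReal (G j r))] at h2
    have h3 : ∀ j : Fin (m+1), (∑' r, ENNReal.ofReal (G j r))
        = ENNReal.ofReal (if (j:ℕ) = 0 then L₀ else L) := by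
      intro j
      rw [← ENNReal.ofReal_tsum_of_nonneg (hG_nonneg j) (hG_summable j)]
      congr 1
      rw [hGdef]; dsimp only
      rw [tsum_mul_left]
      split
      · rw [one_mul, hL₀def]
      · rw [hLdef, hL₀def]
    have h4 : (∏ j : Fin (m+1), ∑' r, ENNReal.ofReal (G j r))
        = ENNReal.ofReal L₀ * (ENNReal.ofReal L)^m := by
      rw [Finset.prod_congr rfl (fun j _ => h3 j), Fin.prod_univ_succ,
        if_pos (show (((0:Fin (m+1)):ℕ) = 0) from rfl)]
      have hrest : (∏ j : Fin m, ENNReal.ofReal (if ((j.succ : Fin (m+1)):ℕ) = 0 then L₀ else L))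
          = (ENNReal.ofReal L)^m := by
        calc (∏ j : Fin m, ENNReal.ofReal (if ((j.succ : Fin (m+1)):ℕ) = 0 then L₀ else L))
            = ∏ _j : Fin m, ENNReal.ofReal L := by
              apply Finset.prod_congr rfl
              intro j _
              rw [if_neg (show ¬ (((j.succ : Fin (m+1)):ℕ) = 0) by simp [Fin.val_succ])]
          _ = (ENNReal.ofReal L)^m := by
              rw [Finset.prod_const, Finset.card_univ, Fintype.card_fin]
      rw [hrest]
    rw [h4] at h2
    have h5 : ENNReal.ofReal (L₀ * L^m) ≤ ENNReal.ofReal 1 := by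
      rw [ENNReal.ofReal_mul hL₀_nonneg, ENNReal.ofReal_pow hL_nonneg]
      calc ENNReal.ofReal L₀ * (ENNReal.ofReal L)^m
          ≤ ENNReal.ofReal (Smass M ρ q 1 (m+1) (fun _ => 0)) := by rw [h1]; exact h2
        _ ≤ ENNReal.ofReal 1 := ENNReal.ofReal_le_ofReal hmass_ub
    exact (ENNReal.ofReal_le_ofReal_iff zero_le_one).mp h5
  -- conclusion
  have hL_le_one : L ≤ 1 := by
    by_contra hL
    push_neg at hL
    have hL₀_pos : 0 < L₀ := by
      by_contra h
      push_neg at h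
      have : L ≤ 0 := by
        rw [hLdef]
        exact mul_nonpos_of_nonneg_of_nonpos hK_pos.le h
      linarith
    obtain ⟨m, hm⟩ := ((tendsto_pow_atTop_atTop_of_one_lt hL).eventually_gt_atTop (1/L₀)).exists
    have h2 : 1 < L₀ * L ^ m := by
      rw [div_lt_iff₀ hL₀_pos] at hm
      nlinarith
    linarith [hLn m]
  have hL₀_ub : L₀ ≤ 1 - x + x / (R:ℝ) := by
    have : K * L₀ ≤ 1 := by rw [← hLdef]; exact hL_le_one
    rw [hKdef] at this
    have h7 := mul_le_mul_of_nonneg_left this hKinv_pos.le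
    rw [← mul_assoc, mul_inv_cancel₀ hKinv_pos.ne', one_mul, mul_one] at h7
    exact h7
  -- final algebra
  have hmain : ρ * x / 2 * (Real.log (1/q) - (R:ℝ)) ≤ 1 - x + x / (R:ℝ) :=
    le_trans hL₀_lb hL₀_ub
  have hy0 : 0 < Real.exp M := Real.exp_pos M
  have hxy : x * Real.exp M = 1 := by
    rw [hxdef, ← Real.exp_add]
    simp
  have h5 := mul_le_mul_of_nonneg_left hmain (by positivity : (0:ℝ) ≤ 2 * Real.exp M)
  have e1 : 2 * Real.exp M * (ρ * x / 2 * (Real.log (1/q) - (R:ℝ)))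
      = (x * Real.exp M) * (ρ * (Real.log (1/q) - (R:ℝ))) := by ring
  have e2 : 2 * Real.exp M * (1 - x + x / (R:ℝ))
      = 2 * Real.exp M - 2 * (x * Real.exp M) + 2 * (x * Real.exp M) / (R:ℝ) := by ring
  rw [e1, e2, hxy, one_mul] at h5
  have hR0 : (0:ℝ) < (R:ℝ) := by linarith
  have h6 : ρ * Real.log (1/q) - ρ * (R:ℝ) ≤ 2 * Real.exp M - 2 + 2 / (R:ℝ) := by
    calc ρ * Real.log (1/q) - ρ * (R:ℝ) = ρ * (Real.log (1/q) - (R:ℝ)) := by ring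
      _ ≤ 2 * Real.exp M - 2 * 1 + 2 * 1 / (R:ℝ) := h5
      _ = 2 * Real.exp M - 2 + 2 / (R:ℝ) := by ring
  linarith

open Filter in
/-- Proposition 3.6. (a) If `q(ρ) ∈ (0,1)` satisfies
`2(1−e^{−M}) ≤ e^{−M} ρ log(1/q(ρ)) ≤ 2` and the total-mass bounds
`1−e^{−M} ≤ Smass ≤ 1` for every `n`, then `ρ log(1/q(ρ)) → 2(e^M − 1)` as `ρ → 0+`.
(b) For fixed `ρ`, if `q(M)` satisfies the same properties for every `M > 0`, then
`e^{−M} log(1/q(M)) → 2/ρ` as `M → ∞`. -/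
theorem tilting_parameter_asymptotics :
    (∀ M : ℝ, 0 < M → ∀ qf : ℝ → ℝ,
      (∀ ρ : ℝ, 0 < ρ →
        qf ρ ∈ Set.Ioo (0 : ℝ) 1 ∧
        (2 * (1 - Real.exp (-M)) ≤ Real.exp (-M) * ρ * Real.log (1 / qf ρ) ∧
          Real.exp (-M) * ρ * Real.log (1 / qf ρ) ≤ 2) ∧
        ∀ n : ℕ, 1 ≤ n →
          1 - Real.exp (-M) ≤ Smass M ρ (qf ρ) 1 n (fun _ => 0) ∧
            Smass M ρ (qf ρ) 1 n (fun _ => 0) ≤ 1) →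
      Tendsto (fun ρ : ℝ => ρ * Real.log (1 / qf ρ)) (nhdsWithin 0 (Set.Ioi 0))
        (nhds (2 * (Real.exp M - 1)))) ∧
    (∀ ρ : ℝ, 0 < ρ → ∀ qf : ℝ → ℝ,
      (∀ M : ℝ, 0 < M →
        qf M ∈ Set.Ioo (0 : ℝ) 1 ∧
        (2 * (1 - Real.exp (-M)) ≤ Real.exp (-M) * ρ * Real.log (1 / qf M) ∧
          Real.exp (-M) * ρ * Real.log (1 / qf M) ≤ 2) ∧
        ∀ n : ℕ, 1 ≤ n →
          1 - Real.exp (-M) ≤ Smass M ρ (qf M) 1 n (fun _ => 0) ∧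
            Smass M ρ (qf M) 1 n (fun _ => 0) ≤ 1) →
      Tendsto (fun M : ℝ => Real.exp (-M) * Real.log (1 / qf M)) atTop
        (nhds (2 / ρ))) := by
  constructor
  · -- part (a)
    intro M hM qf hyp
    have hy0 : 0 < Real.exp M := Real.exp_pos M
    have hxy : Real.exp (-M) * Real.exp M = 1 := by rw [← Real.exp_add]; simp
    rw [Metric.tendsto_nhdsWithin_nhds]
    intro ε hε
    set R : ℕ := ⌈(4:ℝ)/ε⌉₊ + 1 with hRdef
    have hR1 : 1 ≤ R := by omega
    have hR0 : (0:ℝ) < (R:ℝ) := by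
      have : (1:ℝ) ≤ (R:ℝ) := by exact_mod_cast hR1
      linarith
    have hRge : (4:ℝ)/ε ≤ (R:ℝ) := by
      calc (4:ℝ)/ε ≤ (⌈(4:ℝ)/ε⌉₊ : ℝ) := Nat.le_ceil _
        _ ≤ (R:ℝ) := by exact_mod_cast Nat.le_succ _
    have h2R : 2/(R:ℝ) ≤ ε/2 := by
      rw [div_le_iff₀ hR0]
      rw [div_le_iff₀ hε] at hRge
      nlinarith
    refine ⟨ε/(2*(R:ℝ)), by positivity, ?_⟩
    intro ρ hρ hdist
    rw [Real.dist_eq, sub_zero] at hdist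
    have hρ0 : 0 < ρ := hρ
    rw [abs_of_pos hρ0] at hdist
    obtain ⟨hqIoo, ⟨hlow, hhigh⟩, hmass⟩ := hyp ρ hρ0
    have hlb : 2*(Real.exp M - 1) ≤ ρ * Real.log (1/qf ρ) := by
      have h5 := mul_le_mul_of_nonneg_left hlow hy0.le
      have e1 : Real.exp M * (2*(1 - Real.exp (-M)))
          = 2*Real.exp M - 2*(Real.exp (-M) * Real.exp M) := by ring
      have e2 : Real.exp M * (Real.exp (-M) * ρ * Real.log (1/qf ρ))
          = (Real.exp (-M) * Real.exp M) * (ρ * Real.log (1/qf ρ)) := by ring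
      rw [e1, e2, hxy] at h5
      linarith
    have hub := key_bound hM hρ0 hqIoo.1 hqIoo.2 hmass R hR1
    rw [Real.dist_eq, abs_of_nonneg (by linarith)]
    have hρR : ρ * (R:ℝ) < ε/2 := by
      have h6 := mul_lt_mul_of_pos_right hdist hR0
      calc ρ * (R:ℝ) < ε/(2*(R:ℝ)) * (R:ℝ) := h6
        _ = ε/2 := by field_simp
    linarith
  · -- part (b)
    intro ρ hρ qf hyp
    have hlim0 : Filter.Tendsto (fun M : ℝ => Real.exp (-M)) atTop (nhds 0) :=
      Real.tendsto_exp_neg_atTop_nhds_zero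
    have hlow_t : Filter.Tendsto (fun M : ℝ => 2*(1 - Real.exp (-M))/ρ) atTop (nhds (2/ρ)) := by
      have h1 : Filter.Tendsto (fun M : ℝ => 2*(1 - Real.exp (-M))) atTop (nhds (2*(1-0))) :=
        (tendsto_const_nhds.sub hlim0).const_mul 2
      have h2 := h1.div_const ρ
      norm_num at h2
      exact h2
    apply tendsto_of_tendsto_of_tendsto_of_le_of_le' hlow_t tendsto_const_nhds
    · filter_upwards [eventually_gt_atTop 0] with M hM
      obtain ⟨_, ⟨hlow, _⟩, _⟩ := hyp M hM
      rw [div_le_iff₀ hρ]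
      have e1 : Real.exp (-M)*Real.log (1/qf M)*ρ = Real.exp (-M)*ρ*Real.log (1/qf M) := by
        ring
      linarith
    · filter_upwards [eventually_gt_atTop 0] with M hM
      obtain ⟨_, ⟨_, hhigh⟩, _⟩ := hyp M hM
      rw [le_div_iff₀ hρ]
      have e1 : Real.exp (-M)*Real.log (1/qf M)*ρ = Real.exp (-M)*ρ*Real.log (1/qf M) := by
        ring
      linarith

end
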